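/- Asymptotics of the Gamma-ratio sum, case 2λμ > 1 (Lemma 6, first case): Let λ > 0 and μ > 0 with 2λμ > 1, and assume λμ is not an integer greater than or equal to 2 (so that Γ(j+1−λμ) is finite and nonzero for every integer j ≥ 1). Then lim_{i→∞} i^{1−2λμ} ∑_{j=1}^{i−1} ( Γ(j) / Γ(j+1−λμ) )² = 1/(2λμ − 1). -/

import Mathlib

open Filter Topology

section GammaRatioAux
open Real Asymptotics

/-- Wendel's upper bound: `Γ(x+s) ≤ Γ(x) * x^s` for `x > 0`, `s ∈ [0,1]`. -/
lemma wendel_upper {x s : ℝ} (hx : 0 < x) (hs0 : 0 ≤ s) (hs1 : s ≤ 1) :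
    Real.Gamma (x + s) ≤ Real.Gamma x * x ^ s := by
  have h1 : (0:ℝ) < x + 1 := by linarith
  have hxs : 0 < x + s := by linarith
  have key := Real.convexOn_log_Gamma.2 (Set.mem_Ioi.2 hx) (Set.mem_Ioi.2 h1)
    (by linarith : (0:ℝ) ≤ 1 - s) hs0 (by ring)
  have hmix : (1 - s) • x + s • (x + 1) = x + s := by simp [smul_eq_mul]; ring
  rw [hmix] at key
  simp only [Function.comp_apply, smul_eq_mul] at key
  have hGx := Real.Gamma_pos_of_pos hx
  have hGxs := Real.Gamma_pos_of_pos hxs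
  have hG1 := Real.Gamma_pos_of_pos h1
  have := Real.exp_le_exp.2 key
  rw [Real.exp_log hGxs, Real.exp_add, mul_comm (1-s), mul_comm s,
    ← Real.rpow_def_of_pos hGx, ← Real.rpow_def_of_pos hG1] at this
  calc Real.Gamma (x + s) ≤ Real.Gamma x ^ (1 - s) * Real.Gamma (x + 1) ^ s := this
    _ = Real.Gamma x * x ^ s := by
        rw [Real.Gamma_add_one hx.ne', Real.mul_rpow hx.le hGx.le,
          ← mul_assoc, mul_comm (Real.Gamma x ^ (1-s)), mul_assoc,
          ← Real.rpow_add hGx]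
        simp [mul_comm]

lemma wendel_lower {x s : ℝ} (hx : 0 < x) (hs0 : 0 ≤ s) (hs1 : s ≤ 1) :
    x * Real.Gamma x ≤ Real.Gamma (x + s) * (x + s) ^ (1 - s) := by
  have hxs : 0 < x + s := by linarith
  have := wendel_upper hxs (by linarith : (0:ℝ) ≤ 1 - s) (by linarith)
  rw [show x + s + (1 - s) = x + 1 by ring, Real.Gamma_add_one hx.ne'] at this
  exact this

/-- For `s ∈ [0,1]`, `Γ(n+s)/(Γ(n)·n^s) → 1`. -/
lemma ratio_tendsto_one_of_mem {s : ℝ} (hs0 : 0 ≤ s) (hs1 : s ≤ 1) :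
    Tendsto (fun n : ℕ => Real.Gamma (n + s) / (Real.Gamma n * (n:ℝ) ^ s))
      atTop (𝓝 1) := by
  have hlo : Tendsto (fun n : ℕ => ((n:ℝ) / ((n:ℝ) + s)) ^ (1 - s)) atTop (𝓝 1) := by
    have h1 : Tendsto (fun n : ℕ => (n:ℝ) / ((n:ℝ) + s)) atTop (𝓝 1) := by
      have ha : Tendsto (fun n : ℕ => 1 + s / (n:ℝ)) atTop (𝓝 1) := by
        simpa using (tendsto_const_nhds (x := (1:ℝ)) (f := atTop)).add
          (tendsto_const_div_atTop_nhds_zero_nat s)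
      have := ha.inv₀ one_ne_zero
      rw [inv_one] at this
      apply this.congr'
      filter_upwards [eventually_gt_atTop 0] with n hn
      have hn' : (0:ℝ) < n := by exact_mod_cast hn
      rw [show 1 + s / (n:ℝ) = ((n:ℝ) + s) / n by field_simp, inv_div]
    have := h1.rpow_const (p := 1 - s) (Or.inl one_ne_zero)
    simpa using this
  apply tendsto_of_tendsto_of_tendsto_of_le_of_le' hlo tendsto_const_nhds
  · filter_upwards [eventually_gt_atTop 0] with n hn
    have hn' : (0:ℝ) < n := by exact_mod_cast hn
    have hns : (0:ℝ) < (n:ℝ) + s := by linarith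
    have h := wendel_lower hn' hs0 hs1
    rw [Real.div_rpow hn'.le hns.le, div_le_div_iff₀ (by positivity) (by positivity)]
    have hG := Real.Gamma_pos_of_pos hn'
    -- n^(1-s) * (Γn * n^s) ≤ Γ(n+s) * (n+s)^(1-s)
    calc (n:ℝ) ^ (1 - s) * (Real.Gamma n * (n:ℝ) ^ s)
        = (n:ℝ) * Real.Gamma n := by
          rw [mul_comm (Real.Gamma _), ← mul_assoc, ← Real.rpow_add hn']; simp
      _ ≤ Real.Gamma ((n:ℝ) + s) * ((n:ℝ) + s) ^ (1 - s) := h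
  · filter_upwards [eventually_gt_atTop 0] with n hn
    have hn' : (0:ℝ) < n := by exact_mod_cast hn
    have hG := Real.Gamma_pos_of_pos hn'
    rw [div_le_one (by positivity)]
    simpa using wendel_upper hn' hs0 hs1

lemma tendsto_nat_div_add (a : ℝ) :
    Tendsto (fun n : ℕ => (n:ℝ) / ((n:ℝ) + a)) atTop (𝓝 1) := by
  have ha : Tendsto (fun n : ℕ => 1 + a / (n:ℝ)) atTop (𝓝 1) := by
    simpa using (tendsto_const_nhds (x := (1:ℝ)) (f := atTop)).add
      (tendsto_const_div_atTop_nhds_zero_nat a)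
  have := ha.inv₀ one_ne_zero
  rw [inv_one] at this
  apply this.congr'
  filter_upwards [eventually_gt_atTop 0] with n hn
  have hn' : (0:ℝ) < n := by exact_mod_cast hn
  rw [show 1 + a / (n:ℝ) = ((n:ℝ) + a) / n by field_simp, inv_div]

lemma step_down (a : ℝ)
    (h : Tendsto (fun n : ℕ => Real.Gamma (n + (a + 1)) / (Real.Gamma n * (n:ℝ) ^ (a + 1)))
      atTop (𝓝 1)) :
    Tendsto (fun n : ℕ => Real.Gamma (n + a) / (Real.Gamma n * (n:ℝ) ^ a)) atTop (𝓝 1) := by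
  have := h.mul (tendsto_nat_div_add a)
  rw [mul_one] at this
  apply this.congr'
  filter_upwards [eventually_gt_atTop (max 1 ⌈-a⌉₊)] with n hn
  rw [max_lt_iff] at hn
  have hn1 : (1:ℝ) < n := by exact_mod_cast hn.1
  have hna : (0:ℝ) < (n:ℝ) + a := by
    have : (-a : ℝ) < n := lt_of_le_of_lt (Nat.le_ceil _) (by exact_mod_cast hn.2)
    linarith
  have hn0 : (0:ℝ) < n := by linarith
  have hG : Real.Gamma (n:ℝ) ≠ 0 := (Real.Gamma_pos_of_pos hn0).ne'
  have hrec : Real.Gamma ((n:ℝ) + (a + 1)) = ((n:ℝ) + a) * Real.Gamma ((n:ℝ) + a) := by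
    rw [show (n:ℝ) + (a + 1) = ((n:ℝ) + a) + 1 by ring, Real.Gamma_add_one hna.ne']
  rw [hrec, Real.rpow_add_one hn0.ne']
  have hpow : ((n:ℝ)) ^ a ≠ 0 := (Real.rpow_pos_of_pos hn0 a).ne'
  field_simp

lemma ratio_tendsto_one {a : ℝ} (ha : a ≤ 1) :
    Tendsto (fun n : ℕ => Real.Gamma (n + a) / (Real.Gamma n * (n:ℝ) ^ a)) atTop (𝓝 1) := by
  obtain ⟨m, hm0, hm1⟩ : ∃ m : ℕ, 0 ≤ a + m ∧ a + m ≤ 1 := by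
    rcases le_or_gt 0 a with h | h
    · exact ⟨0, by simpa using h, by simpa using ha⟩
    · refine ⟨⌈-a⌉₊, ?_, ?_⟩
      · have := Nat.le_ceil (-a); linarith
      · have := Nat.ceil_lt_add_one (by linarith : (0:ℝ) ≤ -a); linarith
  clear ha
  induction m generalizing a with
  | zero => simp only [Nat.cast_zero, add_zero] at hm0 hm1
            exact ratio_tendsto_one_of_mem hm0 hm1
  | succ k ih =>
      apply step_down
      apply ih <;> push_cast at hm0 hm1 ⊢ <;> linarith

lemma g_div_tendsto {p : ℝ} (hp : 0 < p) :
    Tendsto (fun j : ℕ => (((j:ℝ) + 1) ^ p - (j:ℝ) ^ p) / (j:ℝ) ^ (p - 1))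
      atTop (𝓝 p) := by
  have hder : HasDerivAt (fun x : ℝ => x ^ p) (p * (1:ℝ) ^ (p - 1)) 1 :=
    Real.hasDerivAt_rpow_const (Or.inl one_ne_zero)
  rw [Real.one_rpow, mul_one] at hder
  have hslope := hasDerivAt_iff_tendsto_slope.1 hder
  have hy : Tendsto (fun j : ℕ => 1 + 1 / (j:ℝ)) atTop (𝓝[≠] 1) := by
    rw [tendsto_nhdsWithin_iff]
    constructor
    · simpa using (tendsto_const_nhds (x := (1:ℝ)) (f := atTop)).add
        (tendsto_const_div_atTop_nhds_zero_nat 1)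
    · filter_upwards [eventually_gt_atTop 0] with j hj
      have : (0:ℝ) < 1 / (j:ℝ) := by positivity
      simp only [Set.mem_compl_iff, Set.mem_singleton_iff]
      intro h; nlinarith
  have := hslope.comp hy
  apply this.congr'
  filter_upwards [eventually_gt_atTop 0] with j hj
  have hj' : (0:ℝ) < j := by exact_mod_cast hj
  have h1j : (0:ℝ) < 1 + 1 / (j:ℝ) := by positivity
  have hjp : (0:ℝ) < (j:ℝ) ^ p := Real.rpow_pos_of_pos hj' p
  simp only [Function.comp_apply, slope_def_field]
  have hsplit : ((j:ℝ) + 1) ^ p = (j:ℝ) ^ p * (1 + 1 / (j:ℝ)) ^ p := by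
    rw [← Real.mul_rpow hj'.le h1j.le]; congr 1; field_simp
  rw [Real.one_rpow, hsplit, Real.rpow_sub hj', Real.rpow_one]
  rw [add_sub_cancel_left]
  rw [div_div_eq_mul_div, div_div_eq_mul_div, div_eq_div_iff (by positivity) (by positivity)]
  ring

end GammaRatioAux

open Real Asymptotics in
/-- **Asymptotics of the Gamma-ratio sum, case `2λμ > 1`** (Lemma 6, first case):
`lim_{i→∞} i^{1−2λμ} ∑_{j=1}^{i−1} (Γ(j)/Γ(j+1−λμ))² = 1/(2λμ−1)`. -/
theorem gamma_ratio_sum_asymptotics_gt (lam mu : ℝ) (hlam : 0 < lam) (hmu : 0 < mu)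
    (h2 : 1 < 2 * lam * mu)
    (hnotint : ∀ n : ℕ, 2 ≤ n → lam * mu ≠ (n : ℝ)) :
    Tendsto (fun i : ℕ => (i : ℝ) ^ (1 - 2 * lam * mu) *
        ∑ j ∈ Finset.Icc 1 (i - 1),
          (Real.Gamma (j : ℝ) / Real.Gamma ((j : ℝ) + 1 - lam * mu)) ^ 2)
      atTop (𝓝 (1 / (2 * lam * mu - 1))) := by
  set p : ℝ := 2 * lam * mu - 1 with hpdef
  have hp : 0 < p := by simp only [hpdef]; linarith
  set a : ℝ := 1 - lam * mu with hadef
  have ha1 : a ≤ 1 := by simp only [hadef]; nlinarith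
  have hpa : p - 1 = -(2 * a) := by simp only [hpdef, hadef]; ring
  set b : ℕ → ℝ := fun j => (Real.Gamma (j:ℝ) / Real.Gamma ((j:ℝ) + 1 - lam * mu)) ^ 2
    with hbdef
  set g : ℕ → ℝ := fun j => ((j:ℝ) + 1) ^ p - (j:ℝ) ^ p with hgdef
  -- g is positive
  have hgpos : ∀ j : ℕ, 0 < g j := fun j => by
    have : (j:ℝ) ^ p < ((j:ℝ) + 1) ^ p :=
      Real.rpow_lt_rpow (Nat.cast_nonneg j) (by linarith) hp
    simp only [hgdef]; linarith
  -- b j / j^(p-1) → 1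
  have hb : Tendsto (fun j : ℕ => b j / (j:ℝ) ^ (p - 1)) atTop (𝓝 1) := by
    have hR := ratio_tendsto_one ha1
    have := (hR.inv₀ one_ne_zero).mul (hR.inv₀ one_ne_zero)
    rw [inv_one, mul_one] at this
    apply this.congr'
    filter_upwards [eventually_gt_atTop (max 1 ⌈-a⌉₊)] with j hj
    rw [max_lt_iff] at hj
    have hj1 : (0:ℝ) < j := by have : (1:ℕ) < j := hj.1; exact_mod_cast Nat.lt_of_lt_of_le Nat.zero_lt_one this.le
    have hja : (0:ℝ) < (j:ℝ) + a := by
      have : (-a : ℝ) < j := lt_of_le_of_lt (Nat.le_ceil _) (by exact_mod_cast hj.2)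
      linarith
    have hG : (0:ℝ) < Real.Gamma (j:ℝ) := Real.Gamma_pos_of_pos hj1
    have hGa : (0:ℝ) < Real.Gamma ((j:ℝ) + a) := Real.Gamma_pos_of_pos hja
    have hjp : (0:ℝ) < (j:ℝ) ^ a := Real.rpow_pos_of_pos hj1 a
    have harg : (j:ℝ) + 1 - lam * mu = (j:ℝ) + a := by simp only [hadef]; ring
    simp only [hbdef, harg, hpa]
    rw [Real.rpow_neg hj1.le, show (2:ℝ) * a = a + a by ring, Real.rpow_add hj1]
    rw [div_pow]
    field_simp
  -- b j / g j → 1/p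
  have hbg : Tendsto (fun j : ℕ => b j / g j) atTop (𝓝 (1 / p)) := by
    have := hb.div (g_div_tendsto hp) hp.ne'
    apply this.congr'
    filter_upwards [eventually_gt_atTop 0] with j hj
    have hj1 : (0:ℝ) < j := by exact_mod_cast hj
    have hjp : ((j:ℝ) ^ (p-1)) ≠ 0 := (Real.rpow_pos_of_pos hj1 _).ne'
    exact (div_div_div_cancel_right₀ hjp _ _)
  -- (b - (1/p) g) is o(g)
  have hlo : (fun j : ℕ => b j - (1/p) * g j) =o[atTop] g := by
    rw [isLittleO_iff_tendsto fun j h => absurd h (hgpos j).ne']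
    have : Tendsto (fun j : ℕ => b j / g j - 1/p) atTop (𝓝 (1/p - 1/p)) :=
      hbg.sub tendsto_const_nhds
    rw [sub_self] at this
    apply this.congr
    intro j
    rw [sub_div, mul_div_assoc, div_self (hgpos j).ne', mul_one]
  -- partial sums of g
  have hsumg : ∀ n : ℕ, ∑ j ∈ Finset.range n, g j = (n:ℝ) ^ p := by
    intro n
    have := Finset.sum_range_sub (f := fun j : ℕ => (j:ℝ) ^ p) n
    simp only [hgdef]
    rw [show (fun j : ℕ => ((j:ℝ)+1) ^ p - (j:ℝ) ^ p)
        = (fun j : ℕ => ((j+1:ℕ):ℝ) ^ p - (j:ℝ) ^ p) by ext j; push_cast; ring]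
    rw [this, Nat.cast_zero, Real.zero_rpow hp.ne', sub_zero]
  have hsum_tendsto : Tendsto (fun n => ∑ j ∈ Finset.range n, g j) atTop atTop := by
    simp only [hsumg]
    exact (tendsto_rpow_atTop hp).comp tendsto_natCast_atTop_atTop
  -- Stolz–Cesàro style summation
  have hsum : (fun n => ∑ j ∈ Finset.range n, (b j - (1/p) * g j)) =o[atTop]
      (fun n => (n:ℝ) ^ p) := by
    have := hlo.sum_range (fun j => (hgpos j).le) hsum_tendsto
    simpa only [hsumg] using this
  have hdiv : Tendsto (fun n : ℕ =>
      (∑ j ∈ Finset.range n, (b j - (1/p) * g j)) / (n:ℝ) ^ p) atTop (𝓝 0) :=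
    hsum.tendsto_div_nhds_zero
  have hS : Tendsto (fun n : ℕ => (∑ j ∈ Finset.range n, b j) / (n:ℝ) ^ p)
      atTop (𝓝 (1/p)) := by
    have := hdiv.add (tendsto_const_nhds (x := 1/p) (f := atTop))
    rw [zero_add] at this
    apply this.congr'
    filter_upwards [eventually_gt_atTop 0] with n hn
    have hn1 : (0:ℝ) < n := by exact_mod_cast hn
    have hnp : ((n:ℝ) ^ p) ≠ 0 := (Real.rpow_pos_of_pos hn1 _).ne'
    rw [Finset.sum_sub_distrib, ← Finset.mul_sum, hsumg, sub_div, mul_div_assoc,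
      div_self hnp, mul_one, sub_add_cancel]
  -- final transfer
  apply hS.congr'
  filter_upwards [eventually_gt_atTop 0] with i hi
  have hi1 : (0:ℝ) < i := by exact_mod_cast hi
  have hrange : ∑ j ∈ Finset.range i, b j
      = ∑ j ∈ Finset.Icc 1 (i - 1), b j := by
    rw [Finset.range_eq_Ico, Finset.sum_eq_sum_Ico_succ_bot hi]
    have hb0 : b 0 = 0 := by simp [hbdef, Real.Gamma_zero]
    rw [hb0, zero_add]
    have hIcc : Finset.Icc 1 (i-1) = Finset.Ico 1 i := by
      ext x; simp only [Finset.mem_Icc, Finset.mem_Ico]; omega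
    rw [hIcc]
  have hexp : (i:ℝ) ^ (1 - 2 * lam * mu) = ((i:ℝ) ^ p)⁻¹ := by
    rw [show (1 - 2 * lam * mu) = -p by simp only [hpdef]; ring, Real.rpow_neg hi1.le]
  rw [hrange, div_eq_inv_mul, ← hexp]
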